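/- Fix δ ∈ (0, π/2). For all real numbers 0 ≤ α₁ ≤ α₂ ≤ 1 there exists a constant C = C(α₂ − α₁, δ) > 0 such that for every λ ∈ Γ_δ, every choice of sign ±, and every Schwartz function u on ℝ: ∫_ℝ |ζ|^{2+2α₁} |û(ζ)|² / |ζ ± 2λ²|² dζ ≤ C (2 Im(λ²))^{−2(α₂−α₁)} ∫_ℝ |ζ|^{2α₂} |û(ζ)|² dζ. -/

import Mathlib

open MeasureTheory Complex

/-- The Fourier transform with normalization `û(ζ) = (2π)^{-1/2} ∫ e^{ixζ} u(x) dx`. -/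
noncomputable def FT (u : ℝ → ℂ) (ζ : ℝ) : ℂ :=
  (Real.sqrt (2 * Real.pi) : ℂ)⁻¹ * ∫ x : ℝ, Complex.exp (Complex.I * x * ζ) * u x

/-- The sector `Γ_δ = {λ ∈ ℂ : Im(λ²) > 0, δ < arg(λ²) < π − δ}`. -/
def GammaSet (δ : ℝ) : Set ℂ :=
  {l : ℂ | 0 < (l ^ 2).im ∧ δ < (l ^ 2).arg ∧ (l ^ 2).arg < Real.pi - δ}

open FourierTransform in
lemma FT_eq_schwartz (u : SchwartzMap ℝ ℂ) :
    ∃ w : SchwartzMap ℝ ℂ, ∀ ζ : ℝ, FT (⇑u) ζ = w ζ := by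
  have ht : (-(2 * Real.pi)⁻¹ : ℝ) ≠ 0 := by simp [Real.pi_ne_zero]
  refine ⟨(Real.sqrt (2 * Real.pi) : ℂ)⁻¹ •
    SchwartzMap.compCLMOfContinuousLinearEquiv ℝ
      ((LinearEquiv.smulOfNeZero ℝ ℝ _ ht).toContinuousLinearEquiv)
      (SchwartzMap.fourierTransformCLM ℝ u), fun ζ => ?_⟩
  have hTζ : ((LinearEquiv.smulOfNeZero ℝ ℝ _ ht).toContinuousLinearEquiv) ζ
      = (-(2 * Real.pi)⁻¹ : ℝ) • ζ := by
    simp [Units.smul_mk0]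
  rw [SchwartzMap.smul_apply, SchwartzMap.compCLMOfContinuousLinearEquiv_apply,
    Function.comp_apply, SchwartzMap.fourierTransformCLM_apply, hTζ,
    SchwartzMap.fourier_coe, Real.fourier_eq', smul_eq_mul]
  unfold FT
  congr 1
  refine integral_congr_ae (Filter.Eventually.of_forall fun x => ?_)
  rw [smul_eq_mul]
  beta_reduce
  have h1 : (inner ℝ x ((-(2 * Real.pi)⁻¹ : ℝ) * ζ) : ℝ) = -(2 * Real.pi)⁻¹ * (x * ζ) := by
    simp [RCLike.inner_apply]
    ring
  rw [h1]
  have h2 : (↑(-2 * Real.pi * (-(2 * Real.pi)⁻¹ * (x * ζ))) * Complex.I : ℂ)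
      = Complex.I * x * ζ := by
    have : (-2 * Real.pi * (-(2 * Real.pi)⁻¹ * (x * ζ)) : ℝ) = x * ζ := by
      field_simp
    rw [this]
    push_cast
    ring
  rw [h2, smul_eq_mul]

lemma rpow_abs_le (ζ : ℝ) (p : ℝ) (hp0 : 0 ≤ p) (hp2 : p ≤ 2) : |ζ| ^ p ≤ 1 + ζ ^ 2 := by
  rcases le_total (|ζ|) 1 with h | h
  · have := Real.rpow_le_one (abs_nonneg ζ) h hp0
    nlinarith [sq_nonneg ζ]
  · have h1 : |ζ| ^ p ≤ |ζ| ^ (2:ℝ) := Real.rpow_le_rpow_of_exponent_le h hp2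
    have h2 : |ζ| ^ (2:ℝ) = ζ ^ 2 := by
      rw [show (2:ℝ) = ((2:ℕ):ℝ) by norm_num, Real.rpow_natCast, _root_.sq_abs]
    nlinarith

lemma integrable_rpow_mul_sq (v : SchwartzMap ℝ ℂ) (p : ℝ) (hp0 : 0 ≤ p) (hp2 : p ≤ 2) :
    Integrable (fun ζ : ℝ => |ζ| ^ p * ‖v ζ‖ ^ 2) := by
  obtain ⟨B, hB⟩ : ∃ B : ℝ, ∀ x : ℝ, ‖v x‖ ≤ B := ⟨SchwartzMap.seminorm ℝ 0 0 v,
    fun x => by simpa using SchwartzMap.norm_le_seminorm ℝ v x⟩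
  have hB0 : 0 ≤ B := le_trans (norm_nonneg _) (hB 0)
  have hint : Integrable (fun ζ : ℝ => B * (‖ζ‖ ^ (0:ℕ) * ‖v ζ‖) + B * (‖ζ‖ ^ (2:ℕ) * ‖v ζ‖)) :=
    ((v.integrable_pow_mul volume 0).const_mul B).add
      ((v.integrable_pow_mul volume 2).const_mul B)
  refine hint.mono' ?_ (Filter.Eventually.of_forall fun ζ => ?_)
  · exact (((_root_.continuous_abs.rpow_const (fun x => Or.inr hp0)).mul
      (v.continuous.norm.pow 2)).aestronglyMeasurable)
  · have h1 : |ζ| ^ p ≤ 1 + ζ ^ 2 := rpow_abs_le ζ p hp0 hp2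
    have h2 : ‖v ζ‖ ^ 2 ≤ B * ‖v ζ‖ := by
      have := hB ζ; nlinarith [norm_nonneg (v ζ)]
    have hpnn : 0 ≤ |ζ| ^ p := Real.rpow_nonneg (abs_nonneg ζ) p
    have hnorm : ‖|ζ| ^ p * ‖v ζ‖ ^ 2‖ = |ζ| ^ p * ‖v ζ‖ ^ 2 := by
      rw [Real.norm_eq_abs, _root_.abs_of_nonneg (by positivity)]
    rw [hnorm]
    simp only [Real.norm_eq_abs]
    calc |ζ| ^ p * ‖v ζ‖ ^ 2 ≤ (1 + ζ ^ 2) * (B * ‖v ζ‖) := by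
          apply mul_le_mul h1 h2 (by positivity) (by positivity)
      _ = B * (|ζ| ^ (0:ℕ) * ‖v ζ‖) + B * (|ζ| ^ (2:ℕ) * ‖v ζ‖) := by
          rw [pow_zero, _root_.sq_abs]; ring

lemma sin_ge_of_mem {δ θ : ℝ} (hδ0 : 0 < δ) (hδ : δ < Real.pi / 2) (h1 : δ < θ)
    (h2 : θ < Real.pi - δ) : Real.sin δ ≤ Real.sin θ := by
  rcases le_total θ (Real.pi / 2) with h | h
  · exact Real.sin_le_sin_of_le_of_le_pi_div_two (by linarith) h h1.le
  · rw [← Real.sin_pi_sub θ]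
    exact Real.sin_le_sin_of_le_of_le_pi_div_two (by linarith) (by linarith) (by linarith)

lemma key_rpow {s m : ℝ} (hs : 0 < s) (hs1 : s ≤ 1) (hm : 0 < m) {β : ℝ} (hβ0 : 0 ≤ β)
    (hβ1 : β ≤ 1) (ζ : ℝ) (z : ℂ) (hzm : m ≤ ‖z‖) (hzζ : s * |ζ| ≤ ‖z‖) :
    |ζ| ^ (2 - 2 * β) * m ^ (2 * β) ≤ s⁻¹ ^ 2 * ‖z‖ ^ 2 := by
  have hz0 : 0 < ‖z‖ := lt_of_lt_of_le hm hzm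
  have e1 : (s * |ζ|) ^ (2 - 2 * β) ≤ ‖z‖ ^ (2 - 2 * β) :=
    Real.rpow_le_rpow (by positivity) hzζ (by linarith)
  have e2 : m ^ (2 * β) ≤ ‖z‖ ^ (2 * β) := Real.rpow_le_rpow hm.le hzm (by linarith)
  have e3 : s ^ (2:ℝ) ≤ s ^ (2 - 2 * β) := Real.rpow_le_rpow_of_exponent_ge hs hs1 (by linarith)
  have e4 : (s * |ζ|) ^ (2 - 2 * β) = s ^ (2 - 2 * β) * |ζ| ^ (2 - 2 * β) :=
    Real.mul_rpow hs.le (abs_nonneg ζ)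
  have e5 : ‖z‖ ^ (2 - 2 * β) * ‖z‖ ^ (2 * β) = ‖z‖ ^ (2:ℝ) := by
    rw [← Real.rpow_add hz0]; ring_nf
  have hsq : s ^ (2:ℝ) = s ^ (2:ℕ) := by
    rw [show (2:ℝ) = ((2:ℕ):ℝ) by norm_num, Real.rpow_natCast]
  have hzq : ‖z‖ ^ (2:ℝ) = ‖z‖ ^ (2:ℕ) := by
    rw [show (2:ℝ) = ((2:ℕ):ℝ) by norm_num, Real.rpow_natCast]
  have hζnn : 0 ≤ |ζ| ^ (2 - 2 * β) := Real.rpow_nonneg (abs_nonneg ζ) _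
  have hmnn : 0 ≤ m ^ (2 * β) := Real.rpow_nonneg hm.le _
  have hznn : 0 ≤ ‖z‖ ^ (2 * β) := Real.rpow_nonneg hz0.le _
  have step : s ^ (2:ℕ) * (|ζ| ^ (2 - 2 * β) * m ^ (2 * β)) ≤ ‖z‖ ^ (2:ℕ) := by
    calc s ^ (2:ℕ) * (|ζ| ^ (2 - 2 * β) * m ^ (2 * β))
        ≤ s ^ (2 - 2 * β) * (|ζ| ^ (2 - 2 * β) * ‖z‖ ^ (2 * β)) := by
          rw [← hsq]
          apply mul_le_mul e3 (mul_le_mul_of_nonneg_left e2 hζnn) (by positivity)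
            (Real.rpow_nonneg hs.le _)
      _ = (s * |ζ|) ^ (2 - 2 * β) * ‖z‖ ^ (2 * β) := by rw [e4]; ring
      _ ≤ ‖z‖ ^ (2 - 2 * β) * ‖z‖ ^ (2 * β) := mul_le_mul_of_nonneg_right e1 hznn
      _ = ‖z‖ ^ (2:ℕ) := by rw [e5, hzq]
  have hs2 : (0:ℝ) < s ^ (2:ℕ) := by positivity
  calc |ζ| ^ (2 - 2 * β) * m ^ (2 * β)
      = (s ^ (2:ℕ))⁻¹ * (s ^ (2:ℕ) * (|ζ| ^ (2 - 2 * β) * m ^ (2 * β))) := by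
        field_simp
    _ ≤ (s ^ (2:ℕ))⁻¹ * ‖z‖ ^ (2:ℕ) := by
        apply mul_le_mul_of_nonneg_left step (by positivity)
    _ = s⁻¹ ^ 2 * ‖z‖ ^ 2 := by rw [inv_pow]

theorem resolvent_deriv_hom_sobolev_bound (δ : ℝ) (hδ0 : 0 < δ) (hδ : δ < Real.pi / 2)
    (α₁ α₂ : ℝ) (h0 : 0 ≤ α₁) (h12 : α₁ ≤ α₂) (h21 : α₂ ≤ 1) :
    ∃ C : ℝ, 0 < C ∧ ∀ l ∈ GammaSet δ, ∀ ε : ℝ, (ε = 1 ∨ ε = -1) →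
      ∀ u : SchwartzMap ℝ ℂ,
        (∫ ζ : ℝ, |ζ| ^ (2 + 2 * α₁) * ‖FT (⇑u) ζ‖ ^ 2 / ‖(ζ : ℂ) + ε * 2 * l ^ 2‖ ^ 2)
          ≤ C * (2 * (l ^ 2).im) ^ (-(2 * (α₂ - α₁)))
            * ∫ ζ : ℝ, |ζ| ^ (2 * α₂) * ‖FT (⇑u) ζ‖ ^ 2 := by
  have hsinδ : 0 < Real.sin δ := Real.sin_pos_of_pos_of_lt_pi hδ0 (by linarith [Real.pi_pos])
  set s : ℝ := Real.sin δ / 2 with hs_def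
  have hs : 0 < s := by positivity
  have hs1 : s ≤ 1 := by
    have := Real.sin_le_one δ; simp only [hs_def]; linarith
  have hshalf : s ≤ 1 / 2 := by
    have := Real.sin_le_one δ; simp only [hs_def]; linarith
  refine ⟨s⁻¹ ^ 2, by positivity, fun l hl ε hε u => ?_⟩
  obtain ⟨hIm, harg1, harg2⟩ := hl
  have hεabs : |ε| = 1 := by rcases hε with h | h <;> simp [h]
  -- basic quantities
  set m : ℝ := 2 * (l ^ 2).im with hm_def
  have hm : 0 < m := by positivity
  have hl2 : (l ^ 2) ≠ 0 := fun h => by simp [h] at hIm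
  have habs : 0 < ‖l ^ 2‖ := norm_pos_iff.mpr hl2
  have hgeom : Real.sin δ * ‖l ^ 2‖ ≤ (l ^ 2).im := by
    have h1 : Real.sin δ ≤ Real.sin ((l ^ 2).arg) := sin_ge_of_mem hδ0 hδ harg1 harg2
    have h2 : Real.sin ((l ^ 2).arg) = (l ^ 2).im / ‖l ^ 2‖ := Complex.sin_arg _
    rw [h2] at h1
    calc Real.sin δ * ‖l ^ 2‖
        ≤ ((l ^ 2).im / ‖l ^ 2‖) * ‖l ^ 2‖ :=
          mul_le_mul_of_nonneg_right h1 habs.le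
      _ = (l ^ 2).im := div_mul_cancel₀ _ habs.ne'
  set μ : ℂ := (ε : ℂ) * 2 * l ^ 2 with hμ_def
  have hμnorm : ‖μ‖ = 2 * ‖l ^ 2‖ := by
    simp only [hμ_def]
    rw [norm_mul, norm_mul]
    simp [Complex.norm_real, hεabs]
  have hμim : μ.im = ε * (2 * (l ^ 2).im) := by
    simp [hμ_def, Complex.mul_im, Complex.ofReal_im, Complex.ofReal_re]
    ring
  -- bounds on z = ζ + μ
  have hzm : ∀ ζ : ℝ, m ≤ ‖(ζ : ℂ) + μ‖ := by
    intro ζ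
    have h1 : |((ζ : ℂ) + μ).im| ≤ ‖(ζ : ℂ) + μ‖ := Complex.abs_im_le_norm _
    have h2 : ((ζ : ℂ) + μ).im = ε * (2 * (l ^ 2).im) := by
      simp [Complex.add_im, hμim]
    rw [h2, abs_mul, hεabs, one_mul, _root_.abs_of_nonneg (by positivity)] at h1
    exact h1
  have hzζ : ∀ ζ : ℝ, s * |ζ| ≤ ‖(ζ : ℂ) + μ‖ := by
    intro ζ
    rcases le_total (|ζ|) (2 * ‖μ‖) with h | h
    · have h1 : s * |ζ| ≤ s * (2 * ‖μ‖) := mul_le_mul_of_nonneg_left h hs.le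
      have h2 : s * (2 * ‖μ‖) = Real.sin δ * (2 * ‖l ^ 2‖) := by
        rw [hμnorm, hs_def]; ring
      have h3 : Real.sin δ * (2 * ‖l ^ 2‖) ≤ m := by
        simp only [hm_def]; nlinarith
      linarith [hzm ζ]
    · have h1 : ‖(ζ:ℂ)‖ ≤ ‖(ζ : ℂ) + μ‖ + ‖μ‖ := by
        calc ‖(ζ:ℂ)‖ = ‖((ζ : ℂ) + μ) - μ‖ := by ring_nf
          _ ≤ ‖(ζ : ℂ) + μ‖ + ‖μ‖ := norm_sub_le _ _
      have h2 : ‖(ζ:ℂ)‖ = |ζ| := by rw [Complex.norm_real, Real.norm_eq_abs]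
      have h4 : ‖μ‖ ≤ |ζ| / 2 := by linarith
      have h5 : |ζ| / 2 ≤ ‖(ζ : ℂ) + μ‖ := by linarith [h1, h2.symm.le]
      nlinarith [abs_nonneg ζ]
  -- integrability of the right-hand side integrand
  obtain ⟨w, hw⟩ := FT_eq_schwartz u
  have hg_int : Integrable (fun ζ : ℝ => |ζ| ^ (2 * α₂) * ‖FT (⇑u) ζ‖ ^ 2) := by
    have heq : (fun ζ : ℝ => |ζ| ^ (2 * α₂) * ‖FT (⇑u) ζ‖ ^ 2)
        = fun ζ : ℝ => |ζ| ^ (2 * α₂) * ‖w ζ‖ ^ 2 := funext fun ζ => by rw [hw ζ]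
    rw [heq]
    exact integrable_rpow_mul_sq w (2 * α₂) (by linarith) (by linarith)
  -- pointwise bound
  have hpt : ∀ ζ : ℝ, |ζ| ^ (2 + 2 * α₁) * ‖FT (⇑u) ζ‖ ^ 2 / ‖(ζ : ℂ) + μ‖ ^ 2
      ≤ s⁻¹ ^ 2 * m ^ (-(2 * (α₂ - α₁))) * (|ζ| ^ (2 * α₂) * ‖FT (⇑u) ζ‖ ^ 2) := by
    intro ζ
    have hz0 : 0 < ‖(ζ : ℂ) + μ‖ := lt_of_lt_of_le hm (hzm ζ)
    have hz2 : 0 < ‖(ζ : ℂ) + μ‖ ^ 2 := by positivity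
    rw [div_le_iff₀ hz2]
    rcases eq_or_ne ζ 0 with rfl | hζ0
    · rw [abs_zero, Real.zero_rpow (by linarith : (2:ℝ) + 2 * α₁ ≠ 0), zero_mul]
      positivity
    · have habsζ : 0 < |ζ| := abs_pos.mpr hζ0
      have hsplit : |ζ| ^ (2 + 2 * α₁) = |ζ| ^ (2 * α₂) * |ζ| ^ (2 - 2 * (α₂ - α₁)) := by
        rw [← Real.rpow_add habsζ]; ring_nf
      have hkey := key_rpow hs hs1 hm (by linarith : (0:ℝ) ≤ α₂ - α₁)
        (by linarith : α₂ - α₁ ≤ 1) ζ ((ζ : ℂ) + μ) (hzm ζ) (hzζ ζ)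
      have hmp : 0 < m ^ (2 * (α₂ - α₁)) := Real.rpow_pos_of_pos hm _
      have h6 : |ζ| ^ (2 - 2 * (α₂ - α₁))
          ≤ s⁻¹ ^ 2 * ‖(ζ : ℂ) + μ‖ ^ 2 * (m ^ (2 * (α₂ - α₁)))⁻¹ := by
        rw [← le_div_iff₀ hmp] at hkey
        rw [div_eq_mul_inv] at hkey
        exact hkey
      have hneg : m ^ (-(2 * (α₂ - α₁))) = (m ^ (2 * (α₂ - α₁)))⁻¹ := Real.rpow_neg hm.le _
      calc |ζ| ^ (2 + 2 * α₁) * ‖FT (⇑u) ζ‖ ^ 2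
          = (|ζ| ^ (2 * α₂) * ‖FT (⇑u) ζ‖ ^ 2) * |ζ| ^ (2 - 2 * (α₂ - α₁)) := by
            rw [hsplit]; ring
        _ ≤ (|ζ| ^ (2 * α₂) * ‖FT (⇑u) ζ‖ ^ 2)
            * (s⁻¹ ^ 2 * ‖(ζ : ℂ) + μ‖ ^ 2 * (m ^ (2 * (α₂ - α₁)))⁻¹) := by
            apply mul_le_mul_of_nonneg_left h6 (by positivity)
        _ = s⁻¹ ^ 2 * m ^ (-(2 * (α₂ - α₁))) * (|ζ| ^ (2 * α₂) * ‖FT (⇑u) ζ‖ ^ 2)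
            * ‖(ζ : ℂ) + μ‖ ^ 2 := by
            rw [hneg]; ring
  -- conclude
  have hbound_int : Integrable (fun ζ : ℝ =>
      s⁻¹ ^ 2 * m ^ (-(2 * (α₂ - α₁))) * (|ζ| ^ (2 * α₂) * ‖FT (⇑u) ζ‖ ^ 2)) :=
    hg_int.const_mul _
  have hmono := integral_mono_of_nonneg
    (Filter.Eventually.of_forall (fun ζ => by positivity :
      ∀ ζ : ℝ, (0:ℝ) ≤ |ζ| ^ (2 + 2 * α₁) * ‖FT (⇑u) ζ‖ ^ 2 / ‖(ζ : ℂ) + μ‖ ^ 2))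
    hbound_int (Filter.Eventually.of_forall hpt)
  have hconst : (∫ ζ : ℝ, s⁻¹ ^ 2 * m ^ (-(2 * (α₂ - α₁))) * (|ζ| ^ (2 * α₂) * ‖FT (⇑u) ζ‖ ^ 2))
      = s⁻¹ ^ 2 * m ^ (-(2 * (α₂ - α₁))) * ∫ ζ : ℝ, |ζ| ^ (2 * α₂) * ‖FT (⇑u) ζ‖ ^ 2 :=
    integral_const_mul _ _
  rw [hconst] at hmono
  exact hmono
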